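/- Let P : ℂ → ℂ be a monic polynomial of degree D ≥ 2, with filled Julia set K_P and Green's function G. For every z ∈ ℂ ∖ K_P, the (real Fréchet) derivative of G vanishes at z if and only if P^{∘n}(z) is a critical point of P (i.e., P'(P^{∘n}(z)) = 0) for some integer n ≥ 0. -/

import Mathlib

open Filter Topology

/-- The complex absolute value, as an absolute value (removed from Mathlib). -/
noncomputable def Complex.abs : AbsoluteValue ℂ ℝ := NormedField.toAbsoluteValue ℂ

theorem Complex.norm_eq_abs (z : ℂ) : ‖z‖ = Complex.abs z := rfl

theorem Complex.continuous_abs : Continuous Complex.abs := continuous_norm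

theorem Complex.abs_ofReal (r : ℝ) : Complex.abs (r : ℂ) = |r| := Complex.norm_real r

theorem Complex.abs.ne_zero {z : ℂ} (h : z ≠ 0) : Complex.abs z ≠ 0 := norm_ne_zero_iff.mpr h

open Polynomial in
lemma coeff_bound (D : ℕ) (hD : 2 ≤ D) (P : Polynomial ℂ)
    (hmonic : P.Monic) (hdeg : P.natDegree = D) :
    ∃ M : ℝ, 1 ≤ M ∧ ∀ y : ℂ, 1 ≤ Complex.abs y →
      Complex.abs (P.eval y - y ^ D) ≤ M * Complex.abs y ^ (D - 1) := by
  set q : Polynomial ℂ := P - X ^ D with hq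
  have hqdeg : q.natDegree < D := by
    rcases eq_or_ne q 0 with h0 | h0
    · rw [h0]; simpa using lt_of_lt_of_le two_pos hD
    · have hdlt : q.degree < (D : WithBot ℕ) := by
        have hPdeg : P.degree = (D : WithBot ℕ) := by
          rw [Polynomial.degree_eq_natDegree hmonic.ne_zero, hdeg]
        have := Polynomial.degree_sub_lt
          (by rw [Polynomial.degree_X_pow, hPdeg]) hmonic.ne_zero
          (by simp [hmonic.leadingCoeff])
        rwa [← hq, hPdeg] at this
      exact (Polynomial.natDegree_lt_iff_degree_lt h0).mpr hdlt
  refine ⟨max 1 (∑ i ∈ Finset.range D, Complex.abs (q.coeff i)), le_max_left _ _, ?_⟩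
  intro y hy
  have hev : P.eval y - y ^ D = q.eval y := by simp [hq]
  rw [hev, Polynomial.eval_eq_sum_range' hqdeg]
  calc Complex.abs (∑ i ∈ Finset.range D, q.coeff i * y ^ i)
      ≤ ∑ i ∈ Finset.range D, Complex.abs (q.coeff i * y ^ i) := by
        exact AbsoluteValue.sum_le _ _ _
    _ ≤ ∑ i ∈ Finset.range D, Complex.abs (q.coeff i) * Complex.abs y ^ (D - 1) := by
        refine Finset.sum_le_sum fun i hi => ?_
        rw [map_mul, map_pow]
        refine mul_le_mul_of_nonneg_left ?_ (AbsoluteValue.nonneg _ _)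
        exact pow_le_pow_right₀ hy (by have := Finset.mem_range.mp hi; omega)
    _ = (∑ i ∈ Finset.range D, Complex.abs (q.coeff i)) * Complex.abs y ^ (D - 1) := by
        rw [Finset.sum_mul]
    _ ≤ max 1 (∑ i ∈ Finset.range D, Complex.abs (q.coeff i)) * Complex.abs y ^ (D - 1) :=
        mul_le_mul_of_nonneg_right (le_max_right _ _) (by positivity)

open Polynomial in
lemma green_local (D : ℕ) (hD : 2 ≤ D) (P : Polynomial ℂ)
    (hmonic : P.Monic) (hdeg : P.natDegree = D) (G : ℂ → ℝ)
    (hG : ∀ z : ℂ, Tendsto (fun n : ℕ =>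
        (1 / (D : ℝ) ^ n) *
          max (Real.log (Complex.abs ((fun w => P.eval w)^[n] z))) 0)
      atTop (𝓝 (G z))) :
    ∃ R : ℝ, 4 ≤ R ∧
      (∀ y : ℂ, R ≤ Complex.abs y →
        R ≤ Complex.abs (P.eval y) ∧ 2 * Complex.abs y ≤ Complex.abs (P.eval y) ∧
        (Polynomial.derivative P).eval y ≠ 0) ∧
      (∀ y0 : ℂ, 3 * R < Complex.abs y0 →
        DifferentiableAt ℝ G y0 ∧ fderiv ℝ G y0 ≠ 0) := by
  obtain ⟨M, hM1, hMb⟩ := coeff_bound D hD P hmonic hdeg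
  -- the derivative polynomial is nonzero
  have hP'ne : Polynomial.derivative P ≠ 0 := by
    intro h
    have hc : (Polynomial.derivative P).coeff (D - 1) = P.coeff D * (D : ℂ) := by
      have h1 : D - 1 + 1 = D := by omega
      rw [Polynomial.coeff_derivative, h1]
      norm_cast
      rw [h1]
    rw [h] at hc
    have hPD : P.coeff D = 1 := by
      have := hmonic.leadingCoeff
      rwa [Polynomial.leadingCoeff, hdeg] at this
    rw [hPD, Polynomial.coeff_zero] at hc
    have : (D : ℂ) ≠ 0 := Nat.cast_ne_zero.mpr (by omega)
    exact this (by simpa using hc.symm)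
  obtain ⟨R2, hR2⟩ := ((Polynomial.finite_setOf_isRoot hP'ne).image Complex.abs).bddAbove
  set R : ℝ := 32 * M + max R2 0 + 4 with hR
  have hR4 : 4 ≤ R := by
    have h0 : (0:ℝ) ≤ max R2 0 := le_max_right _ _
    have : (0:ℝ) < M := by linarith
    rw [hR]; linarith
  have hRM : 32 * M ≤ R := by
    have h0 : (0:ℝ) ≤ max R2 0 := le_max_right _ _
    rw [hR]; linarith
  have hRpos : (0:ℝ) < R := by linarith
  -- basic consequences for R ≤ |y|
  have hbasic : ∀ y : ℂ, R ≤ Complex.abs y →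
      R ≤ Complex.abs (P.eval y) ∧ 2 * Complex.abs y ≤ Complex.abs (P.eval y) ∧
      (Polynomial.derivative P).eval y ≠ 0 ∧
      Complex.abs (P.eval y / y ^ D - 1) ≤ M / Complex.abs y := by
    intro y hy
    have hy1 : (1:ℝ) ≤ Complex.abs y := by linarith
    have hy0 : y ≠ 0 := by
      intro h; rw [h] at hy; simp at hy; linarith
    have habs0 : (0:ℝ) < Complex.abs y := by linarith
    have hMy : M + 2 ≤ Complex.abs y := by linarith
    have hq := hMb y hy1
    have hpow : Complex.abs y ≤ Complex.abs y ^ (D - 1) := by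
      calc Complex.abs y = Complex.abs y ^ 1 := (pow_one _).symm
        _ ≤ Complex.abs y ^ (D - 1) := pow_le_pow_right₀ hy1 (by omega)
    have hyD : Complex.abs y ^ D = Complex.abs y ^ (D - 1) * Complex.abs y := by
      rw [← pow_succ]; congr 1; omega
    have hlow : 2 * Complex.abs y ≤ Complex.abs (P.eval y) := by
      have h1 : Complex.abs y ^ D - Complex.abs (P.eval y - y ^ D) ≤
          Complex.abs (P.eval y) := by
        have h := norm_sub_norm_le (y ^ D) (y ^ D - P.eval y)
        have h2 : y ^ D - (y ^ D - P.eval y) = P.eval y := by ring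
        rw [h2] at h
        simp only [Complex.norm_eq_abs] at h
        rw [Complex.abs.map_sub (y ^ D), map_pow] at h
        linarith
      have e1 : 2 * Complex.abs y ≤ Complex.abs y * (Complex.abs y - M) := by nlinarith
      have e2 : Complex.abs y * (Complex.abs y - M) ≤
          Complex.abs y ^ (D - 1) * (Complex.abs y - M) :=
        mul_le_mul_of_nonneg_right hpow (by linarith)
      have e3 : Complex.abs y ^ (D - 1) * (Complex.abs y - M) =
          Complex.abs y ^ D - M * Complex.abs y ^ (D - 1) := by rw [hyD]; ring
      linarith
    refine ⟨by linarith [hlow, hy], hlow, ?_, ?_⟩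
    · intro hroot
      have : Complex.abs y ≤ R2 := hR2 ⟨y, hroot, rfl⟩
      have : Complex.abs y ≤ max R2 0 := le_trans this (le_max_left _ _)
      rw [hR] at hy; linarith
    · have hyDne : (y : ℂ) ^ D ≠ 0 := pow_ne_zero _ hy0
      have : P.eval y / y ^ D - 1 = (P.eval y - y ^ D) / y ^ D := by
        field_simp
      rw [this, map_div₀, map_pow]
      rw [div_le_div_iff₀ (by positivity) habs0]
      calc Complex.abs (P.eval y - y ^ D) * Complex.abs y
          ≤ M * Complex.abs y ^ (D-1) * Complex.abs y :=
            mul_le_mul_of_nonneg_right hq (le_of_lt habs0)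
        _ = M * Complex.abs y ^ D := by rw [hyD]; ring
  set Py : ℂ → ℂ := fun w => P.eval w with hPy
  set U : Set ℂ := {y : ℂ | R < Complex.abs y} with hU
  have hUopen : IsOpen U := isOpen_lt continuous_const Complex.continuous_abs
  have hDR : (2:ℝ) ≤ (D:ℝ) := by exact_mod_cast hD
  have hDne : (D:ℝ) ≠ 0 := by positivity
  -- orbit growth
  have hit : ∀ (k : ℕ) (y : ℂ), R < Complex.abs y → R < Complex.abs (Py^[k] y) := by
    intro k
    induction k with
    | zero => intro y hy; simpa using hy
    | succ n ih =>
      intro y hy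
      have h1 := ih y hy
      obtain ⟨g1, g2, -, -⟩ := hbasic (Py^[n] y) (le_of_lt h1)
      rw [Function.iterate_succ_apply']
      show R < Complex.abs (P.eval (Py^[n] y))
      linarith
  -- the ratio lies in the slit plane and close to 1
  have hratio : ∀ y : ℂ, R ≤ Complex.abs y →
      Complex.abs (P.eval y / y ^ D - 1) ≤ 1/32 ∧ (P.eval y / y ^ D) ∈ Complex.slitPlane := by
    intro y hy
    obtain ⟨-, -, -, hrat⟩ := hbasic y hy
    have habs0 : (0:ℝ) < Complex.abs y := by linarith
    have hMy : M / Complex.abs y ≤ 1/32 := by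
      rw [div_le_div_iff₀ habs0 (by norm_num)]
      linarith
    have h132 : Complex.abs (P.eval y / y ^ D - 1) ≤ 1/32 := le_trans hrat hMy
    refine ⟨h132, ?_⟩
    apply Complex.mem_slitPlane_iff.mpr
    left
    have hre := Complex.abs_re_le_norm (P.eval y / y ^ D - 1)
    have h3 : (P.eval y / y ^ D - 1).re = (P.eval y / y ^ D).re - 1 := by
      simp [Complex.sub_re]
    have := neg_abs_le ((P.eval y / y ^ D - 1).re)
    rw [h3] at hre
    have h4 : |(P.eval y / y ^ D).re - 1| ≤ 1/32 := le_trans hre h132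
    have h5 := abs_le.mp h4
    linarith [h5.1]
  -- the series
  set F : ℕ → ℂ → ℂ := fun k y =>
    ((D:ℂ) ^ (k+1))⁻¹ * Complex.log (P.eval (Py^[k] y) / (Py^[k] y) ^ D) with hF
  set u : ℕ → ℝ := fun k => (M / R) * (1/2) ^ k with hu
  have husum : Summable u := Summable.mul_left _ summable_geometric_two
  have hcoefnorm : ∀ k : ℕ, ‖((D:ℂ) ^ (k+1))⁻¹‖ ≤ (1/2) ^ (k+1) := by
    intro k
    rw [norm_inv, norm_pow, Complex.norm_natCast, one_div, ← inv_pow]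
    exact pow_le_pow_left₀ (by positivity) (inv_anti₀ (by norm_num) hDR) _
  have hFb : ∀ (k : ℕ) (y : ℂ), y ∈ U → ‖F k y‖ ≤ u k := by
    intro k y hy
    have hyk : R < Complex.abs (Py^[k] y) := hit k y hy
    have hykpos : (0:ℝ) < Complex.abs (Py^[k] y) := lt_trans hRpos hyk
    have hlognorm : ‖Complex.log (P.eval (Py^[k] y) / (Py^[k] y) ^ D)‖ ≤
        (3/2) * (M / Complex.abs (Py^[k] y)) := by
      obtain ⟨h132, -⟩ := hratio (Py^[k] y) hyk.le
      obtain ⟨-, -, -, hrat⟩ := hbasic (Py^[k] y) hyk.le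
      have hid : P.eval (Py^[k] y) / (Py^[k] y) ^ D =
          1 + (P.eval (Py^[k] y) / (Py^[k] y) ^ D - 1) := by ring
      rw [hid]
      refine le_trans (Complex.norm_log_one_add_half_le_self ?_) ?_
      · rw [Complex.norm_eq_abs]; linarith
      · rw [Complex.norm_eq_abs]
        exact mul_le_mul_of_nonneg_left hrat (by norm_num)
    have hMyk : M / Complex.abs (Py^[k] y) ≤ M / R := by gcongr <;> linarith
    calc ‖F k y‖ = ‖((D:ℂ) ^ (k+1))⁻¹‖ * ‖Complex.log (P.eval (Py^[k] y) / (Py^[k] y) ^ D)‖ := by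
          rw [hF]; exact norm_mul _ _
      _ ≤ (1/2) ^ (k+1) * ((3/2) * (M / R)) := by
          refine mul_le_mul (hcoefnorm k) (le_trans hlognorm ?_) (norm_nonneg _) (by positivity)
          exact mul_le_mul_of_nonneg_left hMyk (by norm_num)
      _ ≤ u k := by
          rw [hu]
          have hMR : (0:ℝ) ≤ M / R := by positivity
          calc (1/2:ℝ) ^ (k+1) * ((3/2) * (M / R)) = (M / R) * ((3/4) * (1/2)^k) := by ring
            _ ≤ (M / R) * (1/2) ^ k := by
                refine mul_le_mul_of_nonneg_left ?_ hMR
                nlinarith [pow_nonneg (by norm_num : (0:ℝ) ≤ 1/2) k]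
  -- differentiability of iterates
  have hiter : ∀ k : ℕ, Differentiable ℂ (fun y : ℂ => Py^[k] y) := by
    intro k
    induction k with
    | zero => simpa using differentiable_id
    | succ n ih =>
      have h := (P.differentiable).comp ih
      have : (fun y : ℂ => Py^[n+1] y) = (fun w => P.eval w) ∘ (fun y : ℂ => Py^[n] y) := by
        funext y; rw [Function.iterate_succ_apply']; rfl
      rw [this]; exact h
  have hFdiff : ∀ k : ℕ, DifferentiableOn ℂ (F k) U := by
    intro k
    intro y hy
    have hyk : R < Complex.abs (Py^[k] y) := hit k y hy
    have hyk0 : Py^[k] y ≠ 0 := by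
      intro h; rw [h] at hyk; simp at hyk; linarith
    have hd1 : DifferentiableAt ℂ (fun y : ℂ => P.eval (Py^[k] y)) y :=
      ((P.differentiable).comp (hiter k)).differentiableAt
    have hd2 : DifferentiableAt ℂ (fun y : ℂ => (Py^[k] y) ^ D) y :=
      ((hiter k).pow D).differentiableAt
    have hd3 : DifferentiableAt ℂ (fun y : ℂ => P.eval (Py^[k] y) / (Py^[k] y) ^ D) y :=
      hd1.div hd2 (pow_ne_zero _ hyk0)
    have hd4 : DifferentiableAt ℂ Complex.log (P.eval (Py^[k] y) / (Py^[k] y) ^ D) :=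
      Complex.differentiableAt_log (hratio _ hyk.le).2
    exact ((hd4.comp y hd3).const_mul _).differentiableWithinAt
  set H : ℂ → ℂ := fun y => ∑' k, F k y with hH
  have hHdiff : DifferentiableOn ℂ H U :=
    Complex.differentiableOn_tsum_of_summable_norm husum hFdiff hUopen hFb
  have hMR116 : M / R ≤ 1/32 := by
    rw [div_le_div_iff₀ hRpos (by norm_num)]; linarith
  have hHb : ∀ y ∈ U, ‖H y‖ ≤ 1/16 := by
    intro y hy
    have h1 : ‖H y‖ ≤ ∑' k, u k :=
      tsum_of_norm_bounded husum.hasSum (fun k => hFb k y hy)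
    have h2 : ∑' k, u k = (M / R) * 2 := by
      rw [hu, tsum_mul_left, tsum_geometric_two]
    rw [h2] at h1
    linarith
  -- representation of G on U
  have hGrep : ∀ y : ℂ, y ∈ U → G y = Real.log (Complex.abs y) + (H y).re := by
    intro y hy
    have hsum : Summable (fun k => F k y) :=
      Summable.of_norm_bounded husum (fun k => hFb k y hy)
    have hre : HasSum (fun k => (F k y).re) ((H y).re) := by
      have h := hsum.hasSum.mapL Complex.reCLM
      rw [hH]
      simpa using h
    have hcoef : ∀ (k : ℕ) (w : ℂ), (((D:ℂ) ^ (k+1))⁻¹ * w).re = ((D:ℝ) ^ (k+1))⁻¹ * w.re := by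
      intro k w
      have hc : ((D:ℂ) ^ (k+1))⁻¹ = ((((D:ℝ) ^ (k+1))⁻¹ : ℝ) : ℂ) := by push_cast; ring
      rw [hc, Complex.re_ofReal_mul]
    have hpartial : ∀ n : ℕ, ∑ k ∈ Finset.range n, (F k y).re
        = (1/(D:ℝ) ^ n) * Real.log (Complex.abs (Py^[n] y)) - Real.log (Complex.abs y) := by
      intro n
      induction n with
      | zero =>
        simp only [Finset.range_zero, Finset.sum_empty, pow_zero, Function.iterate_zero_apply]
        ring
      | succ n ih =>
        rw [Finset.sum_range_succ, ih]
        have hw : R < Complex.abs (Py^[n] y) := hit n y hy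
        have hwpos : (0:ℝ) < Complex.abs (Py^[n] y) := lt_trans hRpos hw
        have hw0 : (Py^[n] y) ≠ 0 := by
          intro h; rw [h] at hw; simp at hw; linarith
        obtain ⟨hg1, -, -, -⟩ := hbasic (Py^[n] y) hw.le
        have hPw0 : P.eval (Py^[n] y) ≠ 0 := by
          intro h; rw [h] at hg1; simp at hg1; linarith
        have hFre : (F n y).re = ((D:ℝ) ^ (n+1))⁻¹ *
            (Real.log (Complex.abs (P.eval (Py^[n] y)))
              - D * Real.log (Complex.abs (Py^[n] y))) := by
          rw [hF]
          rw [hcoef]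
          congr 1
          rw [Complex.log_re, Complex.norm_eq_abs, map_div₀, map_pow,
            Real.log_div (Complex.abs.ne_zero hPw0) (pow_ne_zero _ (Complex.abs.ne_zero hw0)),
            Real.log_pow]
        rw [hFre, Function.iterate_succ_apply']
        show _ = (1/(D:ℝ) ^ (n+1)) * Real.log (Complex.abs (P.eval (Py^[n] y)))
          - Real.log (Complex.abs y)
        rw [pow_succ]
        have hDn : (D:ℝ) ^ n ≠ 0 := by positivity
        field_simp
        ring
    have h1 : Tendsto (fun n => ∑ k ∈ Finset.range n, (F k y).re) atTop (𝓝 ((H y).re)) :=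
      hre.tendsto_sum_nat
    have heq : (fun n : ℕ => (1/(D:ℝ) ^ n) * max (Real.log (Complex.abs (Py^[n] y))) 0)
        = fun n => (∑ k ∈ Finset.range n, (F k y).re) + Real.log (Complex.abs y) := by
      funext n
      rw [hpartial n, max_eq_left (Real.log_nonneg (by linarith [hit n y hy]))]
      ring
    have h3 := hG y
    rw [heq] at h3
    have h2 : Tendsto (fun n => (∑ k ∈ Finset.range n, (F k y).re) + Real.log (Complex.abs y))
        atTop (𝓝 ((H y).re + Real.log (Complex.abs y))) := h1.add_const _
    have hGy := tendsto_nhds_unique h3 h2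
    linarith
  -- conclusion
  refine ⟨R, hR4, fun y hy => ⟨(hbasic y hy).1, (hbasic y hy).2.1, (hbasic y hy).2.2.1⟩, ?_⟩
  intro y0 hy0
  have hy0pos : (0:ℝ) < Complex.abs y0 := by linarith
  have hy0ne : y0 ≠ 0 := by intro h; rw [h] at hy0; simp at hy0; linarith
  have hy0U : y0 ∈ U := by show R < Complex.abs y0; linarith
  set r0 : ℝ := Complex.abs y0 / 2 with hr0
  have hr0pos : 0 < r0 := by rw [hr0]; positivity
  have h2r0 : r0 + r0 = Complex.abs y0 := by rw [hr0]; ring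
  have hball : Metric.ball y0 r0 ⊆ U := by
    intro y hyb
    rw [Metric.mem_ball, Complex.dist_eq, Complex.norm_eq_abs] at hyb
    show R < Complex.abs y
    have h1 := norm_sub_norm_le y0 (y0 - y)
    have h2 : y0 - (y0 - y) = y := by ring
    rw [h2] at h1
    simp only [Complex.norm_eq_abs] at h1
    rw [Complex.abs.map_sub y0 y] at h1
    linarith
  set c : ℂ := (Complex.abs y0 : ℂ) / y0 with hc
  have hcy0 : c * y0 = (Complex.abs y0 : ℂ) := by rw [hc]; field_simp
  have hcabs : Complex.abs c = 1 := by
    rw [hc, map_div₀, Complex.abs_ofReal, abs_of_pos hy0pos, div_self (ne_of_gt hy0pos)]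
  have hcne : c ≠ 0 := by
    intro h; rw [h] at hcabs; simp at hcabs
  have hslitc : ∀ y ∈ Metric.ball y0 r0, (c * y) ∈ Complex.slitPlane := by
    intro y hyb
    apply Complex.mem_slitPlane_iff.mpr
    left
    have h1 : c * y = (Complex.abs y0 : ℂ) + c * (y - y0) := by rw [← hcy0]; ring
    have h2 : Complex.abs (c * (y - y0)) < r0 := by
      rw [map_mul, hcabs, one_mul]
      rw [Metric.mem_ball, Complex.dist_eq] at hyb
      exact hyb
    rw [h1]
    have h3 : |(c * (y - y0)).re| ≤ Complex.abs (c * (y - y0)) := Complex.abs_re_le_norm _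
    have h4 := neg_abs_le ((c * (y - y0)).re)
    have h5 : ((Complex.abs y0 : ℂ) + c * (y - y0)).re
        = Complex.abs y0 + (c * (y - y0)).re := by
      simp [Complex.add_re, Complex.ofReal_re]
    rw [h5]
    linarith
  have hHd0 : DifferentiableAt ℂ H y0 := hHdiff.differentiableAt (hUopen.mem_nhds hy0U)
  have hderivH : ‖deriv H y0‖ ≤ (1/7) / r0 := by
    apply Complex.norm_deriv_le_div_of_mapsTo_ball (hHdiff.mono hball) ?_ hr0pos
    intro y hyb
    rw [Metric.mem_closedBall]
    have hb1 : ‖H y‖ ≤ 1/16 := hHb y (hball hyb)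
    have hb2 : ‖H y0‖ ≤ 1/16 := hHb y0 hy0U
    calc dist (H y) (H y0) ≤ ‖H y‖ + ‖H y0‖ := dist_le_norm_add_norm _ _
      _ ≤ 1/7 := by linarith
  have hlt : (1/7 : ℝ)/r0 < 1/Complex.abs y0 := by
    rw [div_lt_div_iff₀ hr0pos hy0pos]
    rw [hr0]
    nlinarith
  have hFne : (1/y0 + deriv H y0) ≠ 0 := by
    intro h
    have hd : deriv H y0 = -(1/y0) := by
      linear_combination h
    have h1 : Complex.abs (deriv H y0) = 1 / Complex.abs y0 := by
      rw [hd, AbsoluteValue.map_neg, map_div₀, map_one]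
    have h2 : Complex.abs (deriv H y0) ≤ (1/7)/r0 := by
      rw [← Complex.norm_eq_abs]; exact hderivH
    rw [h1] at h2
    linarith
  have hlogd : HasDerivAt (fun y : ℂ => Complex.log (c * y)) (1/y0) y0 := by
    have hm : HasDerivAt (fun y : ℂ => c * y) c y0 := by
      simpa using (hasDerivAt_id y0).const_mul c
    have hl : HasDerivAt Complex.log (c * y0)⁻¹ (c * y0) :=
      Complex.hasDerivAt_log (hslitc y0 (Metric.mem_ball_self hr0pos))
    have hcomp := hl.comp y0 hm
    rw [show (1/y0) = (c * y0)⁻¹ * c by rw [mul_inv, mul_comm c⁻¹, mul_assoc, inv_mul_cancel₀ hcne, mul_one, one_div]]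
    exact hcomp
  have hFder : HasDerivAt (fun y : ℂ => Complex.log (c * y) + H y)
      (1/y0 + deriv H y0) y0 := hlogd.add hHd0.hasDerivAt
  have hGeq : ∀ y ∈ Metric.ball y0 r0, G y = (Complex.log (c * y) + H y).re := by
    intro y hyb
    rw [hGrep y (hball hyb), Complex.add_re, Complex.log_re, Complex.norm_eq_abs, map_mul, hcabs, one_mul]
  set L : ℂ →L[ℝ] ℝ := Complex.reCLM.comp
    (((1 : ℂ →L[ℂ] ℂ).smulRight (1/y0 + deriv H y0)).restrictScalars ℝ) with hL
  have hFre : HasFDerivAt (fun y : ℂ => (Complex.log (c * y) + H y).re) L y0 := by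
    have h1 := (hFder.hasFDerivAt).restrictScalars ℝ
    exact (Complex.reCLM.hasFDerivAt).comp y0 h1
  have hGF : HasFDerivAt G L y0 := by
    apply hFre.congr_of_eventuallyEq
    filter_upwards [Metric.ball_mem_nhds y0 hr0pos] with y hy
    exact hGeq y hy
  refine ⟨hGF.differentiableAt, ?_⟩
  rw [hGF.fderiv]
  intro h0
  have hLv : L ((starRingEnd ℂ) (1/y0 + deriv H y0))
      = Complex.normSq (1/y0 + deriv H y0) := by
    rw [hL]
    simp only [ContinuousLinearMap.coe_comp', Function.comp_apply,
      ContinuousLinearMap.coe_restrictScalars', ContinuousLinearMap.smulRight_apply,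
      ContinuousLinearMap.one_apply, smul_eq_mul, Complex.reCLM_apply]
    rw [mul_comm, Complex.mul_conj, Complex.ofReal_re]
  rw [h0] at hLv
  simp only [ContinuousLinearMap.zero_apply] at hLv
  exact hFne (Complex.normSq_eq_zero.mp hLv.symm)

/-- Outside the filled Julia set, the derivative of `G` vanishes at `z`
iff some forward iterate of `z` is a critical point of `P`. -/
theorem green_critical_points (D : ℕ) (hD : 2 ≤ D) (P : Polynomial ℂ)
    (hmonic : P.Monic) (hdeg : P.natDegree = D) (G : ℂ → ℝ)
    (hG : ∀ z : ℂ, Tendsto (fun n : ℕ =>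
        (1 / (D : ℝ) ^ n) *
          max (Real.log ‖(fun w => P.eval w)^[n] z‖) 0)
      atTop (𝓝 (G z))) :
    ∀ z : ℂ,
      ¬ Bornology.IsBounded (Set.range fun n : ℕ => (fun w => P.eval w)^[n] z) →
      (fderiv ℝ G z = 0 ↔
        ∃ n : ℕ, (Polynomial.derivative P).eval ((fun w => P.eval w)^[n] z) = 0) := by
  replace hG : ∀ z : ℂ, Tendsto (fun n : ℕ =>
        (1 / (D : ℝ) ^ n) *
          max (Real.log (Complex.abs ((fun w => P.eval w)^[n] z))) 0)
      atTop (𝓝 (G z)) := hG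
  intro z hunb
  obtain ⟨R, hR4, hbasic, hloc⟩ := green_local D hD P hmonic hdeg G hG
  set Py : ℂ → ℂ := fun w => P.eval w with hPy
  have hRpos : (0:ℝ) < R := by linarith
  have hDR : (2:ℝ) ≤ (D:ℝ) := by exact_mod_cast hD
  have hDne : (D:ℝ) ≠ 0 := by positivity
  -- functional equation
  have hPG : ∀ w : ℂ, G (P.eval w) = D * G w := by
    intro w
    have hA := hG w
    have hshift : Tendsto (fun n : ℕ =>
        (1 / (D : ℝ) ^ (n+1)) * max (Real.log (Complex.abs (Py^[n+1] w))) 0)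
        atTop (𝓝 (G w)) := hA.comp (tendsto_add_atTop_nat 1)
    have hB := hG (P.eval w)
    have heq : (fun n : ℕ =>
        (1 / (D : ℝ) ^ n) * max (Real.log (Complex.abs (Py^[n] (P.eval w)))) 0)
        = fun n : ℕ => D * ((1 / (D : ℝ) ^ (n+1)) * max (Real.log (Complex.abs (Py^[n+1] w))) 0) := by
      funext n
      rw [← Function.iterate_succ_apply]
      rw [pow_succ]
      field_simp
    rw [heq] at hB
    have hB' : Tendsto (fun n : ℕ =>
        D * ((1 / (D : ℝ) ^ (n+1)) * max (Real.log (Complex.abs (Py^[n+1] w))) 0))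
        atTop (𝓝 ((D:ℝ) * G w)) := hshift.const_mul _
    exact tendsto_nhds_unique hB hB'
  have hGiter : ∀ (N : ℕ) (w : ℂ), G (Py^[N] w) = (D:ℝ) ^ N * G w := by
    intro N
    induction N with
    | zero => intro w; simp
    | succ n ih =>
      intro w
      rw [Function.iterate_succ_apply', hPG (Py^[n] w), ih w, pow_succ]
      ring
  -- derivative of iterates
  have hPd : ∀ (N : ℕ) (w : ℂ), HasDerivAt (fun x => Py^[N] x)
      (∏ k ∈ Finset.range N, (Polynomial.derivative P).eval (Py^[k] w)) w := by
    intro N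
    induction N with
    | zero => intro w; simpa using hasDerivAt_id' w
    | succ n ih =>
      intro w
      rw [Finset.prod_range_succ, Function.iterate_succ']
      have hp : HasDerivAt Py ((Polynomial.derivative P).eval (Py^[n] w)) (Py^[n] w) :=
        P.hasDerivAt _
      have hcm := hp.comp w (ih w)
      rw [mul_comm]
      exact hcm
  -- escape
  have hesc : ∃ N0 : ℕ, ∀ k : ℕ, N0 ≤ k → 3 * R < Complex.abs (Py^[k] z) := by
    by_cases hcase : ∃ m : ℕ, 3 * R < Complex.abs (Py^[m] z)
    · obtain ⟨m, hm⟩ := hcase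
      refine ⟨m, fun k hk => ?_⟩
      have hstep : ∀ j : ℕ, 3 * R < Complex.abs (Py^[m + j] z) := by
        intro j
        induction j with
        | zero => simpa using hm
        | succ i ihi =>
          have hw : R ≤ Complex.abs (Py^[m + i] z) := by linarith
          obtain ⟨-, h2, -⟩ := hbasic (Py^[m + i] z) hw
          have : m + (i + 1) = (m + i) + 1 := by omega
          rw [this, Function.iterate_succ_apply']
          show 3 * R < Complex.abs (P.eval (Py^[m+i] z))
          linarith
      have : k = m + (k - m) := by omega
      rw [this]
      exact hstep (k - m)
    · push_neg at hcase
      exfalso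
      apply hunb
      rw [isBounded_iff_forall_norm_le]
      refine ⟨3 * R, ?_⟩
      rintro x ⟨n, rfl⟩
      rw [Complex.norm_eq_abs]
      exact hcase n
  obtain ⟨N0, hN0⟩ := hesc
  -- key equivalence for every N ≥ N0
  have key : ∀ N : ℕ, N0 ≤ N →
      (fderiv ℝ G z = 0 ↔ ∃ k, k < N ∧ (Polynomial.derivative P).eval (Py^[k] z) = 0) := by
    intro N hN
    have hyR : 3 * R < Complex.abs (Py^[N] z) := hN0 N hN
    obtain ⟨hGdy, hfy⟩ := hloc (Py^[N] z) hyR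
    set c : ℂ := ∏ k ∈ Finset.range N, (Polynomial.derivative P).eval (Py^[k] z) with hc
    have hfd : HasFDerivAt (fun w => Py^[N] w)
        (ContinuousLinearMap.smulRight (1 : ℂ →L[ℂ] ℂ) c) z := (hPd N z).hasFDerivAt
    have hfdR := hfd.restrictScalars ℝ
    have hGfun : G = fun w => ((D:ℝ) ^ N)⁻¹ • G (Py^[N] w) := by
      funext w
      rw [hGiter N w]
      rw [smul_eq_mul, ← mul_assoc, inv_mul_cancel₀ (by positivity), one_mul]
    have hDpow : ((D:ℝ) ^ N) ≠ 0 := by positivity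
    have hstep : fderiv ℝ G z = ((D:ℝ) ^ N)⁻¹ • ((fderiv ℝ G (Py^[N] z)).comp
        ((ContinuousLinearMap.smulRight (1 : ℂ →L[ℂ] ℂ) c).restrictScalars ℝ)) := by
      conv_lhs => rw [hGfun]
      exact (((hGdy.hasFDerivAt).comp z hfdR).const_smul ((D:ℝ) ^ N)⁻¹).fderiv
    constructor
    · intro h0
      by_contra hnone
      push_neg at hnone
      have hcne : c ≠ 0 := by
        rw [hc, Finset.prod_ne_zero_iff]
        intro k hk hzero
        exact hnone k (Finset.mem_range.mp hk) hzero
      have hcomp0 : (fderiv ℝ G (Py^[N] z)).comp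
          ((ContinuousLinearMap.smulRight (1 : ℂ →L[ℂ] ℂ) c).restrictScalars ℝ) = 0 := by
        have h1 := hstep.symm.trans h0
        exact (smul_eq_zero.mp h1).resolve_left (inv_ne_zero hDpow)
      apply hfy
      ext v
      have h2 := congrFun (congrArg DFunLike.coe hcomp0) (c⁻¹ * v)
      simp only [ContinuousLinearMap.coe_comp', Function.comp_apply,
        ContinuousLinearMap.coe_restrictScalars', ContinuousLinearMap.smulRight_apply,
        ContinuousLinearMap.one_apply, smul_eq_mul, ContinuousLinearMap.zero_apply] at h2
      have hv : c⁻¹ * v * c = v := by field_simp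
      rw [hv] at h2
      rw [h2]
      simp
    · rintro ⟨k, hkN, hk0⟩
      have hc0 : c = 0 := by
        rw [hc]
        exact Finset.prod_eq_zero (Finset.mem_range.mpr hkN) hk0
      rw [hstep, hc0]
      have hz0 : (ContinuousLinearMap.smulRight (1 : ℂ →L[ℂ] ℂ) (0:ℂ)).restrictScalars ℝ
          = 0 := by
        ext v
        simp
      rw [hz0, ContinuousLinearMap.comp_zero, smul_zero]
  constructor
  · intro h0
    obtain ⟨k, -, hk⟩ := (key N0 le_rfl).mp h0
    exact ⟨k, hk⟩
  · rintro ⟨n, hn⟩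
    refine (key (max N0 (n+1)) (le_max_left _ _)).mpr ⟨n, ?_, hn⟩
    exact lt_of_lt_of_le (Nat.lt_succ_self n) (le_max_right _ _)
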